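/- For all k-element subsets H and H' of {1,…,n}: ū(H', ξ_H) = ū(H, ξ_{H'}). That is, the expected time for the strategy that searches H first and then the remaining boxes in uniformly random order to find all targets hidden at H' equals the expected time for the strategy that searches H' first to find all targets hidden at H. -/
import Mathlib


/-- `esym t j A = S_j(A)`: the sum over all `j`-element subsets `B` of `A` of the product
of the search times of the boxes in `B`. -/
noncomputable def esym {n : ℕ} (t : Fin n → ℝ) (j : ℕ) (A : Finset (Fin n)) : ℝ :=
  ∑ B ∈ A.powersetCard j, ∏ i ∈ B, t i

/-- `findAll t H σ = u(H,σ)`: the time to find all targets hidden at the set `H` when the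
boxes are opened in the order `σ 0, σ 1, …`; a look at position `i` contributes its
search time exactly when some target is found at position `i` or later, i.e. the sum is
`Σ_{i ≤ L} t_{σ(i)}` where `L = max {i : σ i ∈ H}`. -/
noncomputable def findAll {n : ℕ} (t : Fin n → ℝ) (H : Finset (Fin n))
    (σ : Equiv.Perm (Fin n)) : ℝ :=
  ∑ i ∈ Finset.univ.filter (fun i : Fin n => ∃ i', i ≤ i' ∧ σ i' ∈ H), t (σ i)

/-- `ubar t k H' H = ū(H', ξ_H)`: the expected time, against the hiding set `H'`, of the
mixed Searcher strategy `ξ_H` that searches the `k` boxes of `H` first and then the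
remaining boxes in uniformly random order: the average of `u(H',σ)` over all
`k!·(n−k)!` permutations `σ` whose first `k` values are exactly the elements of `H`. -/
noncomputable def ubar {n : ℕ} (t : Fin n → ℝ) (k : ℕ) (H' H : Finset (Fin n)) : ℝ :=
  (1 / ((Nat.factorial k : ℝ) * (Nat.factorial (n - k) : ℝ))) *
    ∑ σ ∈ Finset.univ.filter
        (fun σ : Equiv.Perm (Fin n) => ∀ i : Fin n, (i : ℕ) < k → σ i ∈ H),
      findAll t H' σ

/-- The swap function exchanging `H \ H'` and `H' \ H` via a bijection `g`, fixing
everything else. -/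
noncomputable def swapFun {n : ℕ} (H H' : Finset (Fin n))
    (g : (H \ H' : Finset (Fin n)) ≃ (H' \ H : Finset (Fin n))) : Fin n → Fin n :=
  fun x =>
    if h : x ∈ H \ H' then (g ⟨x, h⟩ : Fin n)
    else if h' : x ∈ H' \ H then (g.symm ⟨x, h'⟩ : Fin n)
    else x

lemma swapFun_involutive {n : ℕ} (H H' : Finset (Fin n))
    (g : (H \ H' : Finset (Fin n)) ≃ (H' \ H : Finset (Fin n))) :
    Function.Involutive (swapFun H H' g) := by
  intro x
  unfold swapFun
  by_cases h : x ∈ H \ H'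
  · have hy : ((g ⟨x, h⟩ : (H' \ H : Finset (Fin n))) : Fin n) ∈ H' \ H := (g ⟨x, h⟩).2
    have hy1 : ((g ⟨x, h⟩ : (H' \ H : Finset (Fin n))) : Fin n) ∉ H \ H' := by
      simp only [Finset.mem_sdiff] at hy ⊢; tauto
    simp only [dif_pos h, dif_neg hy1, dif_pos hy]
    have h1 : (⟨((g ⟨x, h⟩ : (H' \ H : Finset (Fin n))) : Fin n), hy⟩ :
        (H' \ H : Finset (Fin n))) = g ⟨x, h⟩ := rfl
    rw [h1, Equiv.symm_apply_apply]
  · by_cases h' : x ∈ H' \ H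
    · have hy : ((g.symm ⟨x, h'⟩ : (H \ H' : Finset (Fin n))) : Fin n) ∈ H \ H' :=
        (g.symm ⟨x, h'⟩).2
      simp only [dif_neg h, dif_pos h', dif_pos hy]
      have h1 : (⟨((g.symm ⟨x, h'⟩ : (H \ H' : Finset (Fin n))) : Fin n), hy⟩ :
          (H \ H' : Finset (Fin n))) = g.symm ⟨x, h'⟩ := rfl
      rw [h1, Equiv.apply_symm_apply]
    · simp only [dif_neg h, dif_neg h']

lemma swapFun_memH {n : ℕ} (H H' : Finset (Fin n))
    (g : (H \ H' : Finset (Fin n)) ≃ (H' \ H : Finset (Fin n))) (x : Fin n) :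
    swapFun H H' g x ∈ H ↔ x ∈ H' := by
  unfold swapFun
  by_cases h : x ∈ H \ H'
  · have hy : ((g ⟨x, h⟩ : (H' \ H : Finset (Fin n))) : Fin n) ∈ H' \ H := (g ⟨x, h⟩).2
    simp only [dif_pos h]
    simp only [Finset.mem_sdiff] at h hy
    tauto
  · by_cases h' : x ∈ H' \ H
    · have hy : ((g.symm ⟨x, h'⟩ : (H \ H' : Finset (Fin n))) : Fin n) ∈ H \ H' :=
        (g.symm ⟨x, h'⟩).2
      simp only [dif_neg h, dif_pos h']
      simp only [Finset.mem_sdiff] at h' hy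
      tauto
    · simp only [dif_neg h, dif_neg h']
      simp only [Finset.mem_sdiff] at h h'
      tauto

/-- for all `k`-element subsets `H` and `H'` of the boxes,
`ū(H', ξ_H) = ū(H, ξ_{H'})`. -/
theorem ubar_symmetric
    {n : ℕ} (t : Fin n → ℝ) (ht : ∀ j, 0 < t j) (k : ℕ) (hk1 : 1 ≤ k) (hkn : k ≤ n)
    (H H' : Finset (Fin n)) (hH : H.card = k) (hH' : H'.card = k) :
    ubar t k H' H = ubar t k H H' := by
  by_cases hHH' : H = H'
  · subst hHH'; rfl
  have hcard : (H \ H').card = (H' \ H).card :=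
    Finset.card_sdiff_comm (hH.trans hH'.symm)
  set g := Finset.equivOfCardEq hcard with hg
  set f := swapFun H H' g with hfdef
  have hinv : Function.Involutive f := swapFun_involutive H H' g
  have hmemH : ∀ x, f x ∈ H ↔ x ∈ H' := swapFun_memH H H' g
  have hmemH' : ∀ x, f x ∈ H' ↔ x ∈ H := by
    intro x
    have := hmemH (f x)
    rw [hinv x] at this
    exact this.symm
  have hfix : ∀ x, x ∉ H → x ∉ H' → f x = x := by
    intro x hx hx'
    have h : x ∉ H \ H' := by simp [Finset.mem_sdiff, hx]
    have h' : x ∉ H' \ H := by simp [Finset.mem_sdiff, hx']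
    simp only [hfdef, swapFun, dif_neg h, dif_neg h']
  set e : Equiv.Perm (Fin n) := hinv.toPerm f with he
  have he_apply : ∀ x, e x = f x := fun _ => rfl
  have hee : ∀ σ : Equiv.Perm (Fin n), e * (e * σ) = σ := by
    intro σ
    ext i
    simp only [Equiv.Perm.mul_apply, he_apply, hinv (σ i)]
  -- nonempty H \ H'
  obtain ⟨w, hw⟩ : (H \ H').Nonempty := by
    rw [Finset.sdiff_nonempty]
    intro hsub
    exact hHH' (Finset.eq_of_subset_of_card_le hsub (hH'.trans hH.symm).le)
  have hwH : w ∈ H := (Finset.mem_sdiff.mp hw).1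
  have hwH' : w ∉ H' := (Finset.mem_sdiff.mp hw).2
  -- set of first k positions
  have hA : ∀ (σ : Equiv.Perm (Fin n)), (∀ i : Fin n, (i : ℕ) < k → σ i ∈ H') →
      ∀ b ∈ H', ((σ.symm b : Fin n) : ℕ) < k := by
    intro σ hσ b hb
    set A : Finset (Fin n) := Finset.univ.filter (fun i : Fin n => (i : ℕ) < k) with hAdef
    have hAcard : A.card = k := by
      have : A = Finset.map ⟨Fin.castLE hkn, Fin.castLE_injective hkn⟩ Finset.univ := by
        ext i
        simp only [hAdef, Finset.mem_filter, Finset.mem_univ, true_and, Finset.mem_map,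
          Function.Embedding.coeFn_mk]
        constructor
        · intro hi; exact ⟨⟨(i : ℕ), hi⟩, rfl⟩
        · rintro ⟨j, -, rfl⟩; exact j.2
      rw [this, Finset.card_map, Finset.card_univ, Fintype.card_fin]
    have himg : A.image σ = H' := by
      apply Finset.eq_of_subset_of_card_le
      · intro b hb
        obtain ⟨i, hi, rfl⟩ := Finset.mem_image.mp hb
        exact hσ i (Finset.mem_filter.mp hi).2
      · rw [Finset.card_image_of_injective _ σ.injective, hAcard, hH']
    rw [← himg] at hb
    obtain ⟨i, hi, hib⟩ := Finset.mem_image.mp hb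
    have : σ.symm b = i := by rw [← hib, Equiv.symm_apply_apply]
    rw [this]
    exact (Finset.mem_filter.mp hi).2
  -- the key payoff identity
  have key : ∀ σ : Equiv.Perm (Fin n), (∀ i : Fin n, (i : ℕ) < k → σ i ∈ H') →
      findAll t H σ = findAll t H' (e * σ) := by
    intro σ hσ
    unfold findAll
    have hfilter : (Finset.univ.filter fun i : Fin n => ∃ i', i ≤ i' ∧ (e * σ) i' ∈ H')
        = Finset.univ.filter fun i : Fin n => ∃ i', i ≤ i' ∧ σ i' ∈ H := by
      apply Finset.filter_congr
      intro i _
      constructor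
      · rintro ⟨i', h1, h2⟩
        exact ⟨i', h1, (hmemH' (σ i')).mp h2⟩
      · rintro ⟨i', h1, h2⟩
        exact ⟨i', h1, (hmemH' (σ i')).mpr h2⟩
    rw [hfilter]
    set F : Finset (Fin n) :=
      Finset.univ.filter (fun i : Fin n => ∃ i', i ≤ i' ∧ σ i' ∈ H) with hF
    set S : Finset (Fin n) := F.image σ with hS
    -- H ⊆ S
    have hHsub : H ⊆ S := by
      intro b hb
      apply Finset.mem_image.mpr
      refine ⟨σ.symm b, ?_, σ.apply_symm_apply b⟩
      apply Finset.mem_filter.mpr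
      refine ⟨Finset.mem_univ _, σ.symm b, le_refl _, ?_⟩
      rw [σ.apply_symm_apply]; exact hb
    -- position of w is ≥ k
    have hwpos : k ≤ ((σ.symm w : Fin n) : ℕ) := by
      by_contra hlt
      push_neg at hlt
      have := hσ (σ.symm w) hlt
      rw [σ.apply_symm_apply] at this
      exact hwH' this
    -- H' ⊆ S
    have hH'sub : H' ⊆ S := by
      intro b hb
      apply Finset.mem_image.mpr
      refine ⟨σ.symm b, ?_, σ.apply_symm_apply b⟩
      apply Finset.mem_filter.mpr
      refine ⟨Finset.mem_univ _, σ.symm w, ?_, ?_⟩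
      · have h1 : ((σ.symm b : Fin n) : ℕ) < k := hA σ hσ b hb
        exact Fin.le_def.mpr (le_of_lt (lt_of_lt_of_le h1 hwpos))
      · rw [σ.apply_symm_apply]; exact hwH
    -- f maps S into S
    have hfS : S.image f = S := by
      apply Finset.eq_of_subset_of_card_le
      · intro b hb
        obtain ⟨c, hc, rfl⟩ := Finset.mem_image.mp hb
        by_cases hcH : c ∈ H
        · exact hH'sub ((hmemH' c).mpr hcH)
        by_cases hcH' : c ∈ H'
        · exact hHsub ((hmemH c).mpr hcH')
        · rw [hfix c hcH hcH']; exact hc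
      · rw [Finset.card_image_of_injective _ hinv.injective]
    calc ∑ i ∈ F, t (σ i) = ∑ b ∈ S, t b := by
            rw [hS, Finset.sum_image (fun x _ y _ h => σ.injective h)]
      _ = ∑ b ∈ S.image f, t b := by rw [hfS]
      _ = ∑ b ∈ S, t (f b) := Finset.sum_image (fun x _ y _ h => hinv.injective h)
      _ = ∑ i ∈ F, t (f (σ i)) := by
            rw [hS, Finset.sum_image (fun x _ y _ h => σ.injective h)]
      _ = ∑ i ∈ F, t ((e * σ) i) := rfl
  -- conclude by the bijection σ ↦ e * σ
  unfold ubar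
  congr 1
  apply Finset.sum_nbij' (fun σ => e * σ) (fun τ => e * τ)
  · intro σ hσ
    simp only [Finset.mem_filter, Finset.mem_univ, true_and] at hσ ⊢
    intro i hi
    exact (hmemH' (σ i)).mpr (hσ i hi)
  · intro τ hτ
    simp only [Finset.mem_filter, Finset.mem_univ, true_and] at hτ ⊢
    intro i hi
    exact (hmemH (τ i)).mpr (hτ i hi)
  · intro σ _; exact hee σ
  · intro τ _; exact hee τ
  · intro σ hσ
    simp only [Finset.mem_filter, Finset.mem_univ, true_and] at hσ
    have h' : ∀ i : Fin n, (i : ℕ) < k → (e * σ) i ∈ H' :=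
      fun i hi => (hmemH' (σ i)).mpr (hσ i hi)
    have h2 := key (e * σ) h'
    rw [hee σ] at h2
    exact h2.symm
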